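/- arXiv:2501.00183 — 3 statements merged into one kernel-verified Lean document; each statement's English description precedes it below -/
import Mathlib

section
/- Let 2 ≤ p < q < s, K ≥ 2, and let z, z̃ have values a(z), a(z̃), b(z), b(z̃) ≥ 0 with a(z)/2 ≤ a(z̃) ≤ 2a(z) and b(z)/2 ≤ b(z̃) ≤ 2b(z). Suppose λ_z, λ_{z̃} > 1 satisfy Λ = λ_z^p + a(z)λ_z^q + b(z)λ_z^s = λ_{z̃}^p + a(z̃)λ_{z̃}^q + b(z̃)λ_{z̃}^s. Then 2^{-1/p} λ_{z̃} ≤ λ_z ≤ 2^{1/p} λ_{z̃}. -/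
open Real

lemma stmt_1_aux (p q s a b a' b' x y : ℝ)
    (h2p : 2 ≤ p) (hpq : p < q) (hqs : q < s)
    (ha : 0 ≤ a) (hb : 0 ≤ b) (ha' : a' ≤ 2 * a) (hb' : b' ≤ 2 * b)
    (hx : 1 < x) (hy : 1 < y)
    (heq : x ^ p + a * x ^ q + b * x ^ s = y ^ p + a' * y ^ q + b' * y ^ s) :
    x ≤ 2 ^ (1 / p) * y := by
  have hp0 : 0 < p := by linarith
  have hq0 : 0 < q := by linarith
  have hs0 : 0 < s := by linarith
  have hy0 : (0 : ℝ) < y := by linarith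
  have hx0 : (0 : ℝ) < x := by linarith
  by_contra h
  push_neg at h
  set M : ℝ := 2 ^ (1 / p) * y with hMdef
  have h2p0 : (0 : ℝ) < (2 : ℝ) ^ (1 / p) := Real.rpow_pos_of_pos (by norm_num) _
  have hM0 : 0 < M := mul_pos h2p0 hy0
  have hMx : M < x := h
  -- M ^ t = 2 ^ (t/p) * y ^ t
  have hMt : ∀ t : ℝ, M ^ t = 2 ^ (t / p) * y ^ t := by
    intro t
    rw [hMdef, Real.mul_rpow (le_of_lt h2p0) hy0.le,
      ← Real.rpow_mul (by norm_num : (0:ℝ) ≤ 2), one_div, inv_mul_eq_div]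
  have hMp : M ^ p = 2 * y ^ p := by
    rw [hMt p, div_self hp0.ne']
    norm_num
  have h2le : ∀ t : ℝ, p ≤ t → (2 : ℝ) ≤ 2 ^ (t / p) := by
    intro t ht
    have : (2:ℝ) ^ (1:ℝ) ≤ 2 ^ (t / p) := by
      apply Real.rpow_le_rpow_left_iff (by norm_num : (1:ℝ) < 2) |>.mpr
      rw [le_div_iff₀ hp0]; linarith
    simpa using this
  have hMq : 2 * y ^ q ≤ M ^ q := by
    rw [hMt q]
    have := h2le q hpq.le
    have hyq : 0 < y ^ q := Real.rpow_pos_of_pos hy0 q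
    nlinarith
  have hMs : 2 * y ^ s ≤ M ^ s := by
    rw [hMt s]
    have := h2le s (by linarith)
    have hys : 0 < y ^ s := Real.rpow_pos_of_pos hy0 s
    nlinarith
  have hxp : M ^ p < x ^ p := Real.rpow_lt_rpow hM0.le hMx hp0
  have hxq : M ^ q ≤ x ^ q := Real.rpow_le_rpow hM0.le hMx.le hq0.le
  have hxs : M ^ s ≤ x ^ s := Real.rpow_le_rpow hM0.le hMx.le hs0.le
  have hyp : 0 < y ^ p := Real.rpow_pos_of_pos hy0 p
  have hyq : 0 < y ^ q := Real.rpow_pos_of_pos hy0 q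
  have hys : 0 < y ^ s := Real.rpow_pos_of_pos hy0 s
  have h1 : a' * y ^ q ≤ a * x ^ q := by nlinarith [mul_le_mul_of_nonneg_left hMq ha, mul_le_mul_of_nonneg_left hxq ha]
  have h2 : b' * y ^ s ≤ b * x ^ s := by nlinarith [mul_le_mul_of_nonneg_left hMs hb, mul_le_mul_of_nonneg_left hxs hb]
  nlinarith

/-- If the coefficients at `z` and `z̃` are comparable within a factor 2, then the intrinsic
scaling parameters `λ_z`, `λ_{z̃}` (both solving `Λ = λ^p + a λ^q + b λ^s`) are comparable
within a factor `2^{1/p}`. -/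
theorem stmt_1 (p q s K Λ az azt bz bzt lz lzt : ℝ)
    (h2p : 2 ≤ p) (hpq : p < q) (hqs : q < s) (hK : 2 ≤ K)
    (haz : 0 ≤ az) (hazt : 0 ≤ azt) (hbz : 0 ≤ bz) (hbzt : 0 ≤ bzt)
    (ha1 : az / 2 ≤ azt) (ha2 : azt ≤ 2 * az)
    (hb1 : bz / 2 ≤ bzt) (hb2 : bzt ≤ 2 * bz)
    (hlz : 1 < lz) (hlzt : 1 < lzt)
    (hz : Λ = lz ^ p + az * lz ^ q + bz * lz ^ s)
    (hzt : Λ = lzt ^ p + azt * lzt ^ q + bzt * lzt ^ s) :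
    (2 : ℝ) ^ (-(1 / p)) * lzt ≤ lz ∧ lz ≤ (2 : ℝ) ^ (1 / p) * lzt := by
  have heq1 : lz ^ p + az * lz ^ q + bz * lz ^ s
      = lzt ^ p + azt * lzt ^ q + bzt * lzt ^ s := by rw [← hz, ← hzt]
  have hupper : lz ≤ 2 ^ (1 / p) * lzt :=
    stmt_1_aux p q s az bz azt bzt lz lzt h2p hpq hqs haz hbz ha2 hb2 hlz hlzt heq1
  have hlower' : lzt ≤ 2 ^ (1 / p) * lz :=
    stmt_1_aux p q s azt bzt az bz lzt lz h2p hpq hqs hazt hbzt (by linarith) (by linarith)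
      hlzt hlz heq1.symm
  refine ⟨?_, hupper⟩
  have h2p0 : (0 : ℝ) < (2 : ℝ) ^ (1 / p) := Real.rpow_pos_of_pos (by norm_num) _
  rw [Real.rpow_neg (by norm_num : (0:ℝ) ≤ 2)]
  rw [inv_mul_le_iff₀ h2p0]
  linarith
end

section
/- Let 2 ≤ p < q < s, K ≥ 2, Λ > 0, and let λ_z, λ_{z̃} > 1, a(z), a(z̃), b(z), b(z̃) ≥ 0 satisfy: (i) Λ = λ_z^p + a(z)λ_z^q + b(z)λ_z^s = λ_{z̃}^p + a(z̃)λ_{z̃}^q + b(z̃)λ_{z̃}^s; (ii) K²λ_z^p ≥ a(z)λ_z^q and K²λ_z^p < b(z)λ_z^s; (iii) a(z) ≤ a(z̃) + (K²−1)λ_z^{p−q} (a Hölder-type bound) and b(z)/2 ≤ b(z̃) ≤ 2b(z). Then λ_z ≥ K^{−2/p} λ_{z̃}. -/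
open Real

/-- Key algebraic step of Lemma 2.4: in the (p,s)-phase, with a Hölder-type bound on `a`
and comparability of `b`, one has `λ_z ≥ K^{-2/p} λ_{z̃}`. -/
theorem stmt_2 (p q s K Λ az azt bz bzt lz lzt : ℝ)
    (h2p : 2 ≤ p) (hpq : p < q) (hqs : q < s) (hK : 2 ≤ K) (hΛ : 0 < Λ)
    (hlz : 1 < lz) (hlzt : 1 < lzt)
    (haz : 0 ≤ az) (hazt : 0 ≤ azt) (hbz : 0 ≤ bz) (hbzt : 0 ≤ bzt)
    (hz : Λ = lz ^ p + az * lz ^ q + bz * lz ^ s)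
    (hzt : Λ = lzt ^ p + azt * lzt ^ q + bzt * lzt ^ s)
    (hphase1 : az * lz ^ q ≤ K ^ 2 * lz ^ p)
    (hphase2 : K ^ 2 * lz ^ p < bz * lz ^ s)
    (hhold : az ≤ azt + (K ^ 2 - 1) * lz ^ (p - q))
    (hb1 : bz / 2 ≤ bzt) (hb2 : bzt ≤ 2 * bz) :
    K ^ (-(2 / p)) * lzt ≤ lz := by
  by_contra hcon
  push_neg at hcon
  have hK0 : (0:ℝ) < K := by linarith
  have hp0 : (0:ℝ) < p := by linarith
  have hlz0 : (0:ℝ) < lz := by linarith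
  have hlzt0 : (0:ℝ) < lzt := by linarith
  have hKe0 : (0:ℝ) < K ^ (2 / p) := rpow_pos_of_pos hK0 _
  -- key: K^(2/p) * lz < lzt
  have hkey : K ^ (2 / p) * lz < lzt := by
    have h1 : K ^ (2 / p) * (K ^ (-(2 / p)) * lzt) = lzt := by
      rw [← mul_assoc, ← rpow_add hK0]
      simp
    have := mul_lt_mul_of_pos_left hcon hKe0
    rw [h1] at this
    exact this
  -- lz < lzt
  have hone : (1:ℝ) ≤ K ^ (2 / p) := by
    have : K ^ (0:ℝ) ≤ K ^ (2 / p) :=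
      rpow_le_rpow_of_exponent_le (by linarith) (by positivity)
    simpa using this
  have hlt : lz < lzt := lt_of_le_of_lt (by nlinarith) hkey
  -- K^2 * lz^p < lzt^p
  have hKp : (K ^ (2 / p)) ^ p = K ^ 2 := by
    rw [← rpow_mul hK0.le, div_mul_cancel₀ _ (ne_of_gt hp0),
      show (2:ℝ) = ((2:ℕ):ℝ) by norm_num, rpow_natCast]
  have hPp : K ^ 2 * lz ^ p < lzt ^ p := by
    have := rpow_lt_rpow (by positivity) hkey hp0
    rwa [mul_rpow hKe0.le hlz0.le, hKp] at this
  -- az * lz^q ≤ azt * lz^q + (K^2 - 1) * lz^p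
  have hlzq : (0:ℝ) < lz ^ q := rpow_pos_of_pos hlz0 q
  have hAq : az * lz ^ q ≤ azt * lz ^ q + (K ^ 2 - 1) * lz ^ p := by
    have h := mul_le_mul_of_nonneg_right hhold hlzq.le
    rw [add_mul, mul_assoc, ← rpow_add hlz0, show p - q + q = p by ring] at h
    exact h
  have hQq : azt * lz ^ q ≤ azt * lzt ^ q :=
    mul_le_mul_of_nonneg_left (rpow_le_rpow hlz0.le hlt.le (by linarith)) hazt
  -- bz * lz^s < bzt * lzt^s
  have hlzs : (0:ℝ) < lz ^ s := rpow_pos_of_pos hlz0 s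
  have hbz0 : (0:ℝ) < bz := by
    by_contra hb
    push_neg at hb
    have : bz * lz ^ s ≤ 0 := mul_nonpos_of_nonpos_of_nonneg hb hlzs.le
    nlinarith [sq_nonneg K, rpow_pos_of_pos hlz0 p]
  have hbzt0 : (0:ℝ) < bzt := by linarith
  have hKs : (2:ℝ) ≤ K ^ (2 / p * s) := by
    have h1 : K ^ (1:ℝ) ≤ K ^ (2 / p * s) := by
      apply rpow_le_rpow_of_exponent_le (by linarith)
      rw [div_mul_eq_mul_div, le_div_iff₀ hp0]
      nlinarith
    rw [rpow_one] at h1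
    linarith
  have hSs : K ^ (2 / p * s) * lz ^ s < lzt ^ s := by
    have := rpow_lt_rpow (by positivity) hkey (by linarith : (0:ℝ) < s)
    rwa [mul_rpow hKe0.le hlz0.le, ← rpow_mul hK0.le] at this
  have hBs : bz * lz ^ s < bzt * lzt ^ s := by
    have h1 : bz * lz ^ s ≤ bzt * (K ^ (2 / p * s) * lz ^ s) := by
      calc bz * lz ^ s ≤ (2 * bzt) * lz ^ s :=
            mul_le_mul_of_nonneg_right (by linarith) hlzs.le
        _ = bzt * (2 * lz ^ s) := by ring
        _ ≤ bzt * (K ^ (2 / p * s) * lz ^ s) :=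
            mul_le_mul_of_nonneg_left (mul_le_mul_of_nonneg_right hKs hlzs.le) hbzt0.le
    have h2 : bzt * (K ^ (2 / p * s) * lz ^ s) < bzt * lzt ^ s :=
      mul_lt_mul_of_pos_left hSs hbzt0
    linarith
  linarith
end

section
/- Let 2 ≤ p < q < s, K ≥ 2, Λ > 0, and λ_z, λ_{z̃} > 1, a(z), a(z̃), b(z), b(z̃) ≥ 0 with Λ = λ_z^p + a(z)λ_z^q + b(z)λ_z^s = λ_{z̃}^p + a(z̃)λ_{z̃}^q + b(z̃)λ_{z̃}^s. Assume K²λ_z^p < a(z)λ_z^q, K²λ_z^p ≥ b(z)λ_z^s, a(z)/2 ≤ a(z̃) ≤ 2a(z), and b(z) ≤ b(z̃) + (K²−1)λ_z^{p−s}. Then λ_z ≥ K^{−2/p} λ_{z̃}. -/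
open Real

/-- Algebraic core of Lemma 2.5: in the (p,q)-phase, with comparability of `a` and a
Hölder-type bound on `b`, one has `λ_z ≥ K^{-2/p} λ_{z̃}`. -/
theorem stmt_3 (p q s K Λ az azt bz bzt lz lzt : ℝ)
    (h2p : 2 ≤ p) (hpq : p < q) (hqs : q < s) (hK : 2 ≤ K) (hΛ : 0 < Λ)
    (hlz : 1 < lz) (hlzt : 1 < lzt)
    (haz : 0 ≤ az) (hazt : 0 ≤ azt) (hbz : 0 ≤ bz) (hbzt : 0 ≤ bzt)
    (hz : Λ = lz ^ p + az * lz ^ q + bz * lz ^ s)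
    (hzt : Λ = lzt ^ p + azt * lzt ^ q + bzt * lzt ^ s)
    (hphase1 : K ^ 2 * lz ^ p < az * lz ^ q)
    (hphase2 : bz * lz ^ s ≤ K ^ 2 * lz ^ p)
    (ha1 : az / 2 ≤ azt) (ha2 : azt ≤ 2 * az)
    (hhold : bz ≤ bzt + (K ^ 2 - 1) * lz ^ (p - s)) :
    K ^ (-(2 / p)) * lzt ≤ lz := by
  by_contra hcon
  push_neg at hcon
  have hp0 : (0:ℝ) < p := by linarith
  have hq0 : (0:ℝ) < q := by linarith
  have hs0 : (0:ℝ) < s := by linarith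
  have hK0 : (0:ℝ) < K := by linarith
  have hK1 : (1:ℝ) ≤ K := by linarith
  have hlz0 : (0:ℝ) < lz := by linarith
  have hlzt0 : (0:ℝ) < lzt := by linarith
  set A := K ^ (-(2 / p)) * lzt with hA
  have hA0 : (0:ℝ) < A := lt_trans hlz0 hcon
  have hApow : ∀ r : ℝ, A ^ r = K ^ (-(2 * r / p)) * lzt ^ r := by
    intro r
    rw [hA, Real.mul_rpow (Real.rpow_nonneg hK0.le _) hlzt0.le,
      ← Real.rpow_mul hK0.le]
    congr 1
    ring
  have hKsq : (0:ℝ) < K ^ 2 := by positivity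
  -- A^p = (K^2)⁻¹ * lzt^p
  have hAp : A ^ p = (K ^ 2)⁻¹ * lzt ^ p := by
    rw [hApow p]
    congr 1
    rw [show -(2 * p / p) = ((-2 : ℤ) : ℝ) by push_cast; field_simp,
      Real.rpow_intCast]
    norm_cast
  -- strict power bounds
  have hlp : lz ^ p < A ^ p := Real.rpow_lt_rpow hlz0.le hcon hp0
  have hlq : lz ^ q < A ^ q := Real.rpow_lt_rpow hlz0.le hcon hq0
  have hls : lz ^ s < A ^ s := Real.rpow_lt_rpow hlz0.le hcon hs0
  -- bound on bz term
  have hbsum : bz * lz ^ s ≤ bzt * lz ^ s + (K ^ 2 - 1) * lz ^ p := by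
    have h2 : lz ^ (p - s) * lz ^ s = lz ^ p := by
      rw [← Real.rpow_add hlz0]; ring_nf
    calc bz * lz ^ s ≤ (bzt + (K ^ 2 - 1) * lz ^ (p - s)) * lz ^ s :=
          mul_le_mul_of_nonneg_right hhold (by positivity)
    _ = bzt * lz ^ s + (K ^ 2 - 1) * (lz ^ (p - s) * lz ^ s) := by ring
    _ = bzt * lz ^ s + (K ^ 2 - 1) * lz ^ p := by rw [h2]
  -- coefficient bounds
  have hcoefq : 2 * K ^ (-(2 * q / p)) ≤ 1 := by
    have h1 : K ^ (-(2 * q / p)) ≤ K ^ (-1 : ℝ) := by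
      apply Real.rpow_le_rpow_of_exponent_le hK1
      have : (1:ℝ) ≤ 2 * q / p := by
        rw [le_div_iff₀ hp0]; linarith
      linarith
    rw [Real.rpow_neg_one] at h1
    have h2 : K⁻¹ ≤ 1 / 2 := by
      rw [inv_le_comm₀ hK0 (by norm_num)]; linarith
    linarith
  have hcoefs : K ^ (-(2 * s / p)) ≤ 1 := by
    apply Real.rpow_le_one_of_one_le_of_nonpos hK1
    have : (0:ℝ) < 2 * s / p := by positivity
    linarith
  -- term bounds
  have t1 : K ^ 2 * lz ^ p < lzt ^ p := by
    calc K ^ 2 * lz ^ p < K ^ 2 * A ^ p := by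
          exact mul_lt_mul_of_pos_left hlp hKsq
    _ = lzt ^ p := by rw [hAp]; field_simp
  have t2 : az * lz ^ q ≤ azt * lzt ^ q := by
    have hAq0 : 0 ≤ A ^ q := (Real.rpow_pos_of_pos hA0 q).le
    calc az * lz ^ q ≤ az * A ^ q := mul_le_mul_of_nonneg_left hlq.le haz
    _ ≤ (2 * azt) * A ^ q := mul_le_mul_of_nonneg_right (by linarith) hAq0
    _ = (azt * (2 * K ^ (-(2 * q / p)))) * lzt ^ q := by rw [hApow q]; ring
    _ ≤ (azt * 1) * lzt ^ q := by
        apply mul_le_mul_of_nonneg_right _ (Real.rpow_pos_of_pos hlzt0 q).le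
        exact mul_le_mul_of_nonneg_left hcoefq hazt
    _ = azt * lzt ^ q := by ring
  have t3 : bzt * lz ^ s ≤ bzt * lzt ^ s := by
    calc bzt * lz ^ s ≤ bzt * A ^ s := mul_le_mul_of_nonneg_left hls.le hbzt
    _ = (bzt * K ^ (-(2 * s / p))) * lzt ^ s := by rw [hApow s]; ring
    _ ≤ (bzt * 1) * lzt ^ s := by
        apply mul_le_mul_of_nonneg_right _ (Real.rpow_pos_of_pos hlzt0 s).le
        exact mul_le_mul_of_nonneg_left hcoefs hbzt
    _ = bzt * lzt ^ s := by ring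
  have : Λ < Λ := by
    calc Λ = lz ^ p + az * lz ^ q + bz * lz ^ s := hz
    _ ≤ K ^ 2 * lz ^ p + az * lz ^ q + bzt * lz ^ s := by nlinarith [hbsum]
    _ < lzt ^ p + azt * lzt ^ q + bzt * lzt ^ s := by linarith
    _ = Λ := hzt.symm
  exact absurd this (lt_irrefl Λ)
end
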